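/- For each N, let x^{(N)} = (x_1^{(N)} ≥ ... ≥ x_N^{(N)} ≥ 0) be nonnegative decreasing tuples such that, as N → ∞: (i) x_i^{(N)}/N → x_i for each fixed i, where x_1 ≥ x_2 ≥ ... ≥ 0; and (ii) N^{−1} ∑_{i=1}^N x_i^{(N)} → γ with ∑_i x_i ≤ γ. Then the polynomials U_N(z) = ∏_{j=1}^N (1 − (x_j^{(N)}/N) z) converge uniformly on compact subsets of ℂ to the entire function E_+(z) = e^{−γz} ∏_{j=1}^∞ e^{x_j z}(1 − x_j z). -/

import Mathlib

open Filter

noncomputable def wf (a : ℝ) (z : ℂ) : ℂ := Complex.exp (a * z) * (1 - a * z)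

lemma wf_hasDerivAt (z : ℂ) (t : ℝ) :
    HasDerivAt (fun s : ℝ => wf s z) (-(t : ℂ) * z ^ 2 * Complex.exp (t * z)) t := by
  have h0 : HasDerivAt (fun s : ℝ => ((s : ℂ) * z)) z t := by
    simpa using (Complex.ofRealCLM.hasDerivAt (x := t)).mul_const z
  have h1 : HasDerivAt (fun s : ℝ => Complex.exp ((s : ℂ) * z))
      (Complex.exp ((t : ℂ) * z) * z) t := h0.cexp
  have h2 : HasDerivAt (fun s : ℝ => (1 - (s : ℂ) * z)) (-z) t := by
    exact ((hasDerivAt_const t (1 : ℂ)).sub h0).congr_deriv (by simp)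
  have := h1.mul h2
  unfold wf
  exact this.congr_deriv (by ring)

/-- Key estimate: for `0 ≤ b ≤ a`,
`‖e^{az}(1-az) - e^{bz}(1-bz)‖ ≤ (a - b) * a * ‖z‖^2 * exp (a * ‖z‖)`. -/
lemma wf_diff_le {a b : ℝ} (hb : 0 ≤ b) (hba : b ≤ a) (z : ℂ) :
    ‖wf a z - wf b z‖ ≤ (a - b) * (a * ‖z‖ ^ 2 * Real.exp (a * ‖z‖)) := by
  have key := Convex.norm_image_sub_le_of_norm_hasDerivWithin_le
    (f := fun s : ℝ => wf s z) (f' := fun s : ℝ => -(s : ℂ) * z ^ 2 * Complex.exp (s * z))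
    (C := a * ‖z‖ ^ 2 * Real.exp (a * ‖z‖)) (s := Set.Icc b a)
    (fun s _ => (wf_hasDerivAt z s).hasDerivWithinAt)
    (fun s hs => by
      rcases hs with ⟨hbs, hsa⟩
      have hs0 : 0 ≤ s := hb.trans hbs
      have h1 : ‖(-(s : ℂ) * z ^ 2 * Complex.exp (s * z))‖
          = s * ‖z‖ ^ 2 * Real.exp ((s : ℂ) * z).re := by
        rw [norm_mul, norm_mul, norm_neg, norm_pow, Complex.norm_exp]
        simp [abs_of_nonneg hs0]
      rw [h1]
      have hre : ((s : ℂ) * z).re ≤ a * ‖z‖ := by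
        have : ((s : ℂ) * z).re = s * z.re := by simp
        rw [this]
        have h2 : s * z.re ≤ s * ‖z‖ :=
          mul_le_mul_of_nonneg_left (Complex.re_le_norm z) hs0
        exact h2.trans (mul_le_mul_of_nonneg_right hsa (norm_nonneg z))
      have hz2 : s * ‖z‖ ^ 2 ≤ a * ‖z‖ ^ 2 :=
        mul_le_mul_of_nonneg_right hsa (by positivity)
      exact mul_le_mul hz2 (Real.exp_le_exp.2 hre) (Real.exp_pos _).le
        (mul_nonneg (hb.trans hba) (by positivity)))
    (convex_Icc b a) (Set.right_mem_Icc.2 hba) (Set.left_mem_Icc.2 hba)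
  rw [norm_sub_rev]
  calc ‖wf b z - wf a z‖ ≤ (a * ‖z‖ ^ 2 * Real.exp (a * ‖z‖)) * ‖b - a‖ := key
    _ = (a - b) * (a * ‖z‖ ^ 2 * Real.exp (a * ‖z‖)) := by
        rw [Real.norm_eq_abs, abs_sub_comm, abs_of_nonneg (by linarith)]; ring

lemma wf_zero (z : ℂ) : wf 0 z = 1 := by simp [wf]

lemma wf_sub_one_le {a : ℝ} (ha : 0 ≤ a) (z : ℂ) :
    ‖wf a z - 1‖ ≤ a ^ 2 * ‖z‖ ^ 2 * Real.exp (a * ‖z‖) := by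
  have := wf_diff_le (le_refl 0) ha z
  rw [wf_zero] at this
  calc ‖wf a z - 1‖ ≤ (a - 0) * (a * ‖z‖ ^ 2 * Real.exp (a * ‖z‖)) := this
    _ = a ^ 2 * ‖z‖ ^ 2 * Real.exp (a * ‖z‖) := by ring

lemma wf_norm_le {a : ℝ} (ha : 0 ≤ a) (z : ℂ) :
    ‖wf a z‖ ≤ Real.exp (2 * (a * ‖z‖)) := by
  have h1 : ‖wf a z‖ ≤ Real.exp (a * ‖z‖) * (1 + a * ‖z‖) := by
    unfold wf
    rw [norm_mul]
    refine mul_le_mul ?_ ?_ (norm_nonneg _) (Real.exp_pos _).le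
    · rw [Complex.norm_exp]
      refine Real.exp_le_exp.2 ?_
      have : ((a : ℂ) * z).re = a * z.re := by simp
      rw [this]
      exact (mul_le_mul_of_nonneg_left (Complex.re_le_norm z) ha)
    · calc ‖1 - (a : ℂ) * z‖ ≤ ‖(1 : ℂ)‖ + ‖(a : ℂ) * z‖ := norm_sub_le _ _
        _ = 1 + a * ‖z‖ := by simp [norm_mul, abs_of_nonneg ha]
  have h2 : (1 + a * ‖z‖) ≤ Real.exp (a * ‖z‖) := by
    have := Real.add_one_le_exp (a * ‖z‖); linarith
  calc ‖wf a z‖ ≤ Real.exp (a * ‖z‖) * Real.exp (a * ‖z‖) :=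
        h1.trans (mul_le_mul_of_nonneg_left h2 (Real.exp_pos _).le)
    _ = Real.exp (2 * (a * ‖z‖)) := by rw [← Real.exp_add]; ring_nf

lemma prod_sub_one_norm_le {ι : Type*} (s : Finset ι) (u : ι → ℂ) :
    ‖(∏ i ∈ s, u i) - 1‖ ≤ Real.exp (∑ i ∈ s, ‖u i - 1‖) - 1 := by
  induction s using Finset.cons_induction with
  | empty => simp
  | cons a s ha ih =>
    rw [Finset.prod_cons, Finset.sum_cons]
    have key : u a * (∏ i ∈ s, u i) - 1
        = u a * ((∏ i ∈ s, u i) - 1) + (u a - 1) := by ring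
    rw [key]
    have hua : ‖u a‖ ≤ Real.exp ‖u a - 1‖ := by
      calc ‖u a‖ ≤ ‖u a - 1‖ + 1 := by
            have := norm_sub_norm_le (u a) (1:ℂ)
            rw [norm_one] at this; linarith
        _ ≤ Real.exp ‖u a - 1‖ := by have := Real.add_one_le_exp ‖u a - 1‖; linarith
    calc ‖u a * ((∏ i ∈ s, u i) - 1) + (u a - 1)‖
        ≤ ‖u a‖ * ‖(∏ i ∈ s, u i) - 1‖ + ‖u a - 1‖ := by
          refine (norm_add_le _ _).trans ?_; rw [norm_mul]
      _ ≤ Real.exp ‖u a - 1‖ * (Real.exp (∑ i ∈ s, ‖u i - 1‖) - 1) + ‖u a - 1‖ := by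
          refine add_le_add_left (mul_le_mul hua ih (norm_nonneg _) (Real.exp_pos _).le) _
      _ ≤ Real.exp (‖u a - 1‖ + ∑ i ∈ s, ‖u i - 1‖) - 1 := by
          rw [Real.exp_add]
          have h1 : ‖u a - 1‖ + 1 ≤ Real.exp ‖u a - 1‖ := by
            have := Real.add_one_le_exp ‖u a - 1‖; linarith
          nlinarith [Real.exp_pos ‖u a - 1‖, Real.exp_pos (∑ i ∈ s, ‖u i - 1‖)]

lemma prod_sub_prod_norm_le {ι : Type*} (s : Finset ι) (u v : ι → ℂ) (B : ι → ℝ)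
    (h1 : ∀ i ∈ s, 1 ≤ B i) (hu : ∀ i ∈ s, ‖u i‖ ≤ B i) (hv : ∀ i ∈ s, ‖v i‖ ≤ B i) :
    ‖(∏ i ∈ s, u i) - ∏ i ∈ s, v i‖ ≤ (∏ i ∈ s, B i) * ∑ i ∈ s, ‖u i - v i‖ := by
  induction s using Finset.cons_induction with
  | empty => simp
  | cons a s ha ih =>
    have hBs : ∀ i ∈ s, (1:ℝ) ≤ B i := fun i hi => h1 i (Finset.mem_cons_of_mem hi)
    have hBprod : (1:ℝ) ≤ ∏ i ∈ s, B i := by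
      calc (1:ℝ) = ∏ _i ∈ s, (1:ℝ) := by simp
        _ ≤ ∏ i ∈ s, B i := Finset.prod_le_prod (fun _ _ => zero_le_one) hBs
    have hBa : 1 ≤ B a := h1 a (Finset.mem_cons_self a s)
    have hvb : ‖∏ i ∈ s, v i‖ ≤ ∏ i ∈ s, B i := by
      calc ‖∏ i ∈ s, v i‖ ≤ ∏ i ∈ s, ‖v i‖ := Finset.norm_prod_le _ _
        _ ≤ ∏ i ∈ s, B i := Finset.prod_le_prod (fun i _ => norm_nonneg _)
            (fun i hi => hv i (Finset.mem_cons_of_mem hi))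
    rw [Finset.prod_cons, Finset.prod_cons, Finset.sum_cons, Finset.prod_cons]
    have key : u a * (∏ i ∈ s, u i) - v a * ∏ i ∈ s, v i
        = u a * ((∏ i ∈ s, u i) - ∏ i ∈ s, v i) + (u a - v a) * ∏ i ∈ s, v i := by ring
    rw [key]
    have ihs := ih (fun i hi => h1 i (Finset.mem_cons_of_mem hi))
      (fun i hi => hu i (Finset.mem_cons_of_mem hi))
      (fun i hi => hv i (Finset.mem_cons_of_mem hi))
    calc ‖u a * ((∏ i ∈ s, u i) - ∏ i ∈ s, v i) + (u a - v a) * ∏ i ∈ s, v i‖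
        ≤ ‖u a‖ * ‖(∏ i ∈ s, u i) - ∏ i ∈ s, v i‖ + ‖u a - v a‖ * ‖∏ i ∈ s, v i‖ := by
          refine (norm_add_le _ _).trans ?_; rw [norm_mul, norm_mul]
      _ ≤ B a * ((∏ i ∈ s, B i) * ∑ i ∈ s, ‖u i - v i‖) + ‖u a - v a‖ * ∏ i ∈ s, B i := by
          refine add_le_add ?_ ?_
          · exact mul_le_mul (hu a (Finset.mem_cons_self a s)) ihs (norm_nonneg _)
              (le_trans zero_le_one hBa)
          · exact mul_le_mul_of_nonneg_left hvb (norm_nonneg _)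
      _ ≤ (B a * ∏ i ∈ s, B i) * (‖u a - v a‖ + ∑ i ∈ s, ‖u i - v i‖) := by
          have hP0 : (0:ℝ) ≤ ∏ i ∈ s, B i := le_trans zero_le_one hBprod
          have h' : ‖u a - v a‖ * ∏ i ∈ s, B i ≤ (B a * ∏ i ∈ s, B i) * ‖u a - v a‖ := by
            rw [mul_comm (‖u a - v a‖)]
            exact mul_le_mul_of_nonneg_right (le_mul_of_one_le_left hP0 hBa) (norm_nonneg _)
          nlinarith [h']



lemma wf_ne_zero {a : ℝ} (z : ℂ) (h : a * ‖z‖ < 1) (ha : 0 ≤ a) : wf a z ≠ 0 := by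
  unfold wf
  refine mul_ne_zero (Complex.exp_ne_zero _) ?_
  intro hc
  have h1 : (1:ℂ) = (a:ℂ) * z := by linear_combination hc
  have h2 : ‖(1:ℂ)‖ = ‖(a:ℂ) * z‖ := by rw [h1]
  rw [norm_one, norm_mul, Complex.norm_real, Real.norm_eq_abs, abs_of_nonneg ha] at h2
  linarith

lemma wf_multipliable (x : ℕ → ℝ) (hnn : ∀ i, 0 ≤ x i) (hsum : Summable x) (z : ℂ) :
    Multipliable (fun i => wf (x i) z) := by
  have hx0 : Tendsto x atTop (nhds 0) := hsum.tendsto_atTop_zero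
  have hδ : ∀ᶠ i in atTop, x i * ‖z‖ ≤ 1/6 := by
    have hpos : (0:ℝ) < 1 / (6 * (‖z‖ + 1)) := by positivity
    filter_upwards [hx0.eventually (eventually_le_nhds hpos)] with i hi
    calc x i * ‖z‖ ≤ (1 / (6 * (‖z‖ + 1))) * ‖z‖ :=
          mul_le_mul_of_nonneg_right hi (norm_nonneg z)
      _ ≤ 1/6 := by
          rw [div_mul_eq_mul_div, one_mul, div_le_div_iff₀ (by positivity) (by norm_num)]
          nlinarith [norm_nonneg z]
  obtain ⟨M₀, hM₀⟩ := eventually_atTop.1 hδ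
  -- tail bound on `‖wf - 1‖`
  have htail1 : ∀ n : ℕ, ‖wf (x (n + M₀)) z - 1‖ ≤ 3 * ‖z‖ * x (n + M₀) := by
    intro n
    have hb := hM₀ (n + M₀) (by omega)
    have hxn := hnn (n + M₀)
    refine (wf_sub_one_le hxn z).trans ?_
    have he : Real.exp (x (n + M₀) * ‖z‖) ≤ 3 := by
      calc Real.exp (x (n + M₀) * ‖z‖) ≤ Real.exp 1 :=
            Real.exp_le_exp.2 (hb.trans (by norm_num))
        _ ≤ 3 := by linarith [Real.exp_one_lt_d9.le]
    calc x (n + M₀) ^ 2 * ‖z‖ ^ 2 * Real.exp (x (n + M₀) * ‖z‖)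
        ≤ (x (n + M₀) * ‖z‖) * (x (n + M₀) * ‖z‖) * 3 := by
          have h0 : (0:ℝ) ≤ x (n + M₀) * ‖z‖ := mul_nonneg hxn (norm_nonneg z)
          have : x (n + M₀) ^ 2 * ‖z‖ ^ 2 = (x (n + M₀) * ‖z‖) * (x (n + M₀) * ‖z‖) := by ring
          rw [this]
          exact mul_le_mul_of_nonneg_left he (by positivity)
      _ ≤ (x (n + M₀)) * (1/3 * ‖z‖) * 3 := by
          have h0 : (0:ℝ) ≤ x (n + M₀) := hnn _
          nlinarith [hM₀ (n + M₀) (by omega : M₀ ≤ n + M₀), norm_nonneg z,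
            mul_nonneg h0 (norm_nonneg z)]
      _ = ‖z‖ * x (n + M₀) := by ring
      _ ≤ 3 * ‖z‖ * x (n + M₀) := by nlinarith [norm_nonneg z, hnn (n + M₀)]
  have hne : ∀ n : ℕ, wf (x (n + M₀)) z ≠ 0 := fun n =>
    wf_ne_zero z ((hM₀ (n + M₀) (by omega)).trans_lt (by norm_num)) (hnn _)
  -- summable logs
  have hlog : Summable (fun n => Complex.log (wf (x (n + M₀)) z)) := by
    refine Summable.of_norm ?_
    refine Summable.of_nonneg_of_le (fun n => norm_nonneg _)
      (fun n => ?_) (((summable_nat_add_iff M₀).2 hsum).mul_left ((3/2) * (3 * ‖z‖)))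
    have hsmall : ‖wf (x (n + M₀)) z - 1‖ ≤ 1/2 := by
      refine (htail1 n).trans ?_
      have := hM₀ (n + M₀) (by omega : M₀ ≤ n + M₀)
      nlinarith [hnn (n + M₀), norm_nonneg z]
    have := Complex.norm_log_one_add_half_le_self (z := wf (x (n + M₀)) z - 1) hsmall
    simp only [add_sub_cancel] at this
    calc ‖Complex.log (wf (x (n + M₀)) z)‖ ≤ 3/2 * ‖wf (x (n + M₀)) z - 1‖ := this
      _ ≤ 3/2 * (3 * ‖z‖ * x (n + M₀)) :=
          mul_le_mul_of_nonneg_left (htail1 n) (by norm_num)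
      _ = 3/2 * (3 * ‖z‖) * x (n + M₀) := by ring
  have htailm : Multipliable (fun n : ℕ => wf (x (n + M₀)) z) := by
    have := Complex.multipliable_of_summable_log hlog
    exact this
  -- assemble: finite head + tail
  set s : Set ℕ := (↑(Finset.range M₀) : Set ℕ) with hs
  have hhead : Multipliable ((fun i => wf (x i) z) ∘ ((↑) : s → ℕ)) :=
    (Finset.range M₀).finite_toSet.multipliable _
  have hcompl : Multipliable ((fun i => wf (x i) z) ∘ ((↑) : ↥(sᶜ) → ℕ)) := by
    have hiff : ∀ n : ℕ, n ∈ sᶜ ↔ n ∉ Finset.range M₀ := fun n => by simp [hs]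
    have hfun : ((fun i => wf (x i) z) ∘ ((↑) : ↥(sᶜ) → ℕ)) ∘
        ((Equiv.subtypeEquivRight hiff).trans (notMemRangeEquiv M₀)).symm
        = (fun n : ℕ => wf (x (n + M₀)) z) := by
      funext n
      have : ((((Equiv.subtypeEquivRight hiff).trans (notMemRangeEquiv M₀)).symm n
          : ↥(sᶜ)) : ℕ) = n + M₀ := by
        simp [Equiv.subtypeEquivRight, notMemRangeEquiv]; rfl
      simp only [Function.comp_apply, this]
    rw [← ((Equiv.subtypeEquivRight hiff).trans (notMemRangeEquiv M₀)).symm.multipliable_iff,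
      hfun]
    exact htailm
  exact Multipliable.mul_compl hhead hcompl
lemma exp_sub_one_le_three {τ : ℝ} (h0 : 0 ≤ τ) (h1 : τ ≤ 1) : Real.exp τ - 1 ≤ 3 * τ := by
  have hm : Real.exp (-τ) * Real.exp τ = 1 := by rw [← Real.exp_add]; simp
  have h2 : Real.exp τ ≤ 1 + τ * Real.exp τ := by
    nlinarith [mul_le_mul_of_nonneg_right (Real.add_one_le_exp (-τ)) (Real.exp_pos τ).le, hm]
  have h3 : Real.exp τ ≤ Real.exp 1 := Real.exp_le_exp.2 h1
  nlinarith [Real.exp_one_lt_d9.le]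

lemma norm_cexp_le (w : ℂ) : ‖Complex.exp w‖ ≤ Real.exp ‖w‖ := by
  rw [Complex.norm_exp]
  exact Real.exp_le_exp.2 ((Complex.re_le_norm w))

lemma prod_wf_norm_le (s : Finset ℕ) (b : ℕ → ℝ) (hb : ∀ i ∈ s, 0 ≤ b i)
    {z : ℂ} {R : ℝ} (hz : ‖z‖ ≤ R) :
    ‖∏ i ∈ s, wf (b i) z‖ ≤ Real.exp (2 * R * ∑ i ∈ s, b i) := by
  calc ‖∏ i ∈ s, wf (b i) z‖ ≤ ∏ i ∈ s, ‖wf (b i) z‖ := Finset.norm_prod_le _ _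
    _ ≤ ∏ i ∈ s, Real.exp (2 * (b i * R)) := by
        refine Finset.prod_le_prod (fun i _ => norm_nonneg _) (fun i hi => ?_)
        refine (wf_norm_le (hb i hi) z).trans (Real.exp_le_exp.2 ?_)
        have := mul_le_mul_of_nonneg_left hz (hb i hi)
        linarith
    _ = Real.exp (2 * R * ∑ i ∈ s, b i) := by
        rw [← Real.exp_sum]
        congr 1
        rw [Finset.mul_sum]
        exact Finset.sum_congr rfl fun i _ => by ring

lemma sum_wf_sub_one_le (s : Finset ℕ) (b : ℕ → ℝ) {δ R : ℝ} (hδR : 2 * δ * R ≤ 1)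
    (hR : 1 ≤ R) (hb0 : ∀ i ∈ s, 0 ≤ b i) (hbδ : ∀ i ∈ s, b i ≤ 2 * δ)
    {z : ℂ} (hz : ‖z‖ ≤ R) :
    ∑ i ∈ s, ‖wf (b i) z - 1‖ ≤ 6 * δ * R ^ 2 * ∑ i ∈ s, b i := by
  have key : ∀ i ∈ s, ‖wf (b i) z - 1‖ ≤ 6 * δ * R ^ 2 * b i := by
    intro i hi
    have hb := hb0 i hi
    have hbd := hbδ i hi
    refine (wf_sub_one_le hb z).trans ?_
    have hzR : ‖z‖ ^ 2 ≤ R ^ 2 := by nlinarith [norm_nonneg z]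
    have hbz : b i * ‖z‖ ≤ 1 := by nlinarith [norm_nonneg z]
    have hexp : Real.exp (b i * ‖z‖) ≤ 3 := by
      calc Real.exp (b i * ‖z‖) ≤ Real.exp 1 := Real.exp_le_exp.2 hbz
        _ ≤ 3 := by linarith [Real.exp_one_lt_d9.le]
    have hb2 : b i ^ 2 ≤ 2 * δ * b i := by nlinarith
    calc b i ^ 2 * ‖z‖ ^ 2 * Real.exp (b i * ‖z‖)
        ≤ (2 * δ * b i) * R ^ 2 * 3 := by
          have h1 : b i ^ 2 * ‖z‖ ^ 2 ≤ (2 * δ * b i) * R ^ 2 := by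
            have h0 : (0:ℝ) ≤ b i ^ 2 := sq_nonneg _
            have h2 : (0:ℝ) ≤ R ^ 2 := sq_nonneg _
            calc b i ^ 2 * ‖z‖ ^ 2 ≤ b i ^ 2 * R ^ 2 :=
                  mul_le_mul_of_nonneg_left hzR h0
              _ ≤ (2 * δ * b i) * R ^ 2 := mul_le_mul_of_nonneg_right hb2 h2
          calc b i ^ 2 * ‖z‖ ^ 2 * Real.exp (b i * ‖z‖)
              ≤ b i ^ 2 * ‖z‖ ^ 2 * 3 := by
                refine mul_le_mul_of_nonneg_left hexp (by positivity)
            _ ≤ (2 * δ * b i) * R ^ 2 * 3 := by nlinarith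
      _ = 6 * δ * R ^ 2 * b i := by ring
  calc ∑ i ∈ s, ‖wf (b i) z - 1‖ ≤ ∑ i ∈ s, 6 * δ * R ^ 2 * b i := Finset.sum_le_sum key
    _ = 6 * δ * R ^ 2 * ∑ i ∈ s, b i := by rw [← Finset.mul_sum]

lemma wf_diff_le' {a b C R : ℝ} (ha : 0 ≤ a) (hb : 0 ≤ b) (haC : a ≤ C) (hbC : b ≤ C)
    {z : ℂ} (hz : ‖z‖ ≤ R) (hR : 0 ≤ R) :
    ‖wf a z - wf b z‖ ≤ |a - b| * (C * R ^ 2 * Real.exp (C * R)) := by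
  have hC : 0 ≤ C := ha.trans haC
  have main : ∀ p q : ℝ, 0 ≤ q → q ≤ p → p ≤ C →
      ‖wf p z - wf q z‖ ≤ |p - q| * (C * R ^ 2 * Real.exp (C * R)) := by
    intro p q hq hqp hpC
    refine (wf_diff_le hq hqp z).trans ?_
    rw [abs_of_nonneg (by linarith)]
    refine mul_le_mul_of_nonneg_left ?_ (by linarith)
    have hp0 : 0 ≤ p := hq.trans hqp
    have hz2 : ‖z‖ ^ 2 ≤ R ^ 2 := by nlinarith [norm_nonneg z]
    have h1 : p * ‖z‖ ^ 2 ≤ C * R ^ 2 :=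
      (mul_le_mul_of_nonneg_left hz2 hp0).trans
        (mul_le_mul_of_nonneg_right hpC (sq_nonneg R))
    have h2 : Real.exp (p * ‖z‖) ≤ Real.exp (C * R) := by
      refine Real.exp_le_exp.2 ?_
      calc p * ‖z‖ ≤ p * R := mul_le_mul_of_nonneg_left hz hp0
        _ ≤ C * R := mul_le_mul_of_nonneg_right hpC hR
    have h3 : (0:ℝ) ≤ p * ‖z‖ ^ 2 := mul_nonneg hp0 (sq_nonneg _)
    calc p * ‖z‖ ^ 2 * Real.exp (p * ‖z‖) ≤ p * ‖z‖ ^ 2 * Real.exp (C * R) :=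
          mul_le_mul_of_nonneg_left h2 h3
      _ ≤ C * R ^ 2 * Real.exp (C * R) :=
          mul_le_mul_of_nonneg_right h1 (Real.exp_pos _).le
  rcases le_total b a with h | h
  · exact main a b hb h haC
  · rw [norm_sub_rev, abs_sub_comm]; exact main b a ha h hbC
set_option maxHeartbeats 2000000 in
lemma main_unif (xN : ℕ → ℕ → ℝ) (x : ℕ → ℝ) (γ : ℝ)
    (hNdec : ∀ N, ∀ i j, i ≤ j → j < N → xN N j ≤ xN N i)
    (hNnn : ∀ N i, i < N → 0 ≤ xN N i)
    (hdec : ∀ i j, i ≤ j → x j ≤ x i) (hnn : ∀ i, 0 ≤ x i)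
    (hconv : ∀ i, Tendsto (fun N : ℕ => xN N i / (N : ℝ)) atTop (nhds (x i)))
    (hsum : Summable x) (hγ : (∑' i, x i) ≤ γ)
    (hsumconv : Tendsto (fun N : ℕ => (∑ i ∈ Finset.range N, xN N i) / (N : ℝ))
      atTop (nhds γ)) (R : ℝ) (hR : 1 ≤ R) :
    TendstoUniformlyOn
      (fun (N : ℕ) (z : ℂ) => ∏ i ∈ Finset.range N, (1 - ((xN N i / (N : ℝ) : ℝ) : ℂ) * z))
      (fun z : ℂ => Complex.exp (-(γ : ℂ) * z) * ∏' i : ℕ, wf (x i) z)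
      atTop (Metric.closedBall 0 R) := by
  have hR0 : (0:ℝ) < R := lt_of_lt_of_le one_pos hR
  rw [Metric.tendstoUniformlyOn_iff]
  intro ε hε
  -- constants
  have hγ0 : 0 ≤ γ := le_trans (tsum_nonneg hnn) hγ
  set Γ : ℝ := γ + 1 with hΓdef
  have hΓ1 : (1:ℝ) ≤ Γ := by simp [hΓdef]; linarith
  have hΓ0 : (0:ℝ) < Γ := lt_of_lt_of_le one_pos hΓ1
  set K₁ : ℝ := Real.exp (Γ * R) with hK₁def
  set K₂ : ℝ := Real.exp (2 * Γ * R) with hK₂def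
  have hK₁ : 1 ≤ K₁ := Real.one_le_exp (by positivity)
  have hK₂ : 1 ≤ K₂ := Real.one_le_exp (by positivity)
  have hK₁0 : 0 < K₁ := lt_of_lt_of_le one_pos hK₁
  have hK₂0 : 0 < K₂ := lt_of_lt_of_le one_pos hK₂
  set ε₀ : ℝ := min ε 1 with hε₀def
  have hε₀ : 0 < ε₀ := lt_min hε one_pos
  have hε₀1 : ε₀ ≤ 1 := min_le_right _ _
  have hε₀ε : ε₀ ≤ ε := min_le_left _ _
  set ε₁ : ℝ := ε₀ / (100 * K₁ * K₂) with hε₁def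
  have hε₁ : 0 < ε₁ := by positivity
  have hε₁1 : ε₁ ≤ 1 := by
    rw [hε₁def, div_le_one (by positivity)]
    nlinarith
  set δ : ℝ := min (1 / (6 * R^2 * Γ)) (ε₁ / (18 * R^2 * Γ)) with hδdef
  have hδ : 0 < δ := lt_min (by positivity) (by positivity)
  have hδa : δ * (6 * R^2 * Γ) ≤ 1 := by
    have h : δ ≤ 1 / (6 * R^2 * Γ) := min_le_left _ _
    have := (le_div_iff₀ (show (0:ℝ) < 6 * R^2 * Γ by positivity)).1 h
    linarith
  have hδb : δ * (18 * R^2 * Γ) ≤ ε₁ := by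
    have h : δ ≤ ε₁ / (18 * R^2 * Γ) := min_le_right _ _
    have := (le_div_iff₀ (show (0:ℝ) < 18 * R^2 * Γ by positivity)).1 h
    linarith
  have hδ1 : 6 * δ * R^2 * Γ ≤ 1 := by nlinarith [hδa]
  have hδ2 : 18 * δ * R^2 * Γ ≤ ε₁ := by nlinarith [hδb]
  have hδR : 2 * δ * R ≤ 1 := by
    have hRΓ : 2 * R ≤ 6 * R^2 * Γ := by nlinarith
    calc 2 * δ * R = δ * (2 * R) := by ring
      _ ≤ δ * (6 * R^2 * Γ) := mul_le_mul_of_nonneg_left hRΓ hδ.le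
      _ ≤ 1 := hδa
  -- choose M
  obtain ⟨M, hM⟩ := eventually_atTop.1
    (hsum.tendsto_atTop_zero.eventually (eventually_le_nhds hδ))
  have hxM : x M ≤ δ := hM M le_rfl
  -- x-side bounds for z in the ball
  have hsumx : ∀ s : Finset ℕ, ∑ i ∈ s, x i ≤ Γ := fun s =>
    le_trans (Summable.sum_le_tsum s (fun i _ => hnn i) hsum) (le_trans hγ (by linarith))
  have hPMn : ∀ z : ℂ, ‖z‖ ≤ R → ‖∏ i ∈ Finset.range M, wf (x i) z‖ ≤ K₂ := by
    intro z hz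
    refine (prod_wf_norm_le _ _ (fun i _ => hnn i) hz).trans (Real.exp_le_exp.2 ?_)
    have := hsumx (Finset.range M)
    nlinarith
  have hPtail : ∀ z : ℂ, ‖z‖ ≤ R →
      ‖(∏' i : ℕ, wf (x i) z) - ∏ i ∈ Finset.range M, wf (x i) z‖ ≤ K₂ * ε₁ := by
    intro z hz
    have hmult := wf_multipliable x hnn hsum z
    have htend := Multipliable.tendsto_prod_tprod_nat hmult
    refine le_of_tendsto ((htend.sub tendsto_const_nhds).norm) ?_
    filter_upwards [eventually_ge_atTop M] with L hL
    rw [← Finset.prod_range_mul_prod_Ico (fun i => wf (x i) z) hL]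
    have key : (∏ i ∈ Finset.range M, wf (x i) z) * (∏ i ∈ Finset.Ico M L, wf (x i) z)
        - ∏ i ∈ Finset.range M, wf (x i) z
        = (∏ i ∈ Finset.range M, wf (x i) z) * ((∏ i ∈ Finset.Ico M L, wf (x i) z) - 1) := by
      ring
    rw [key, norm_mul]
    have hsub : ‖(∏ i ∈ Finset.Ico M L, wf (x i) z) - 1‖ ≤ ε₁ := by
      have hs1 : ∑ i ∈ Finset.Ico M L, ‖wf (x i) z - 1‖
          ≤ 6 * δ * R^2 * ∑ i ∈ Finset.Ico M L, x i := by
        refine sum_wf_sub_one_le _ _ hδR hR (fun i _ => hnn i) (fun i hi => ?_) hz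
        have := hM i (Finset.mem_Ico.1 hi).1
        linarith
      have hs2 : ∑ i ∈ Finset.Ico M L, ‖wf (x i) z - 1‖ ≤ 6 * δ * R^2 * Γ := by
        refine hs1.trans ?_
        have h' := hsumx (Finset.Ico M L)
        have h6 : (0:ℝ) ≤ 6 * δ * R^2 := by positivity
        exact mul_le_mul_of_nonneg_left h' h6
      refine (prod_sub_one_norm_le _ _).trans ?_
      have h0 : 0 ≤ ∑ i ∈ Finset.Ico M L, ‖wf (x i) z - 1‖ :=
        Finset.sum_nonneg fun i _ => norm_nonneg _
      have := exp_sub_one_le_three h0 (hs2.trans hδ1)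
      linarith [hδ2]
    exact mul_le_mul (hPMn z hz) hsub (norm_nonneg _) hK₂0.le
  -- more constants
  set C : ℝ := x 0 + 1 with hCdef
  have hC0 : 0 < C := by have := hnn 0; simp [hCdef]; linarith
  set K₄ : ℝ := C * R^2 * Real.exp (C * R) with hK₄def
  have hK₄0 : 0 < K₄ := by positivity
  set K₅ : ℝ := (Real.exp (2 * C * R))^M * K₄ with hK₅def
  have hK₅0 : 0 < K₅ := by positivity
  set c₂ : ℝ := min 1 (ε₁ / ((K₅ + 1) * (M + 1))) with hc₂def
  have hc₂ : 0 < c₂ := lt_min one_pos (by positivity)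
  set εB : ℝ := min 1 (min (1/R) (ε₀ / (8 * K₁ * K₂ * R))) with hεBdef
  have hεB : 0 < εB := lt_min one_pos (lt_min (by positivity) (by positivity))
  -- eventual facts in N
  have hev0 : ∀ᶠ N : ℕ in atTop, M + 1 ≤ N := eventually_ge_atTop (M + 1)
  have hev1 : ∀ᶠ N : ℕ in atTop,
      |(∑ i ∈ Finset.range N, xN N i) / (N : ℝ) - γ| ≤ εB := by
    have := Metric.tendsto_nhds.1 hsumconv εB hεB
    filter_upwards [this] with N hN
    rw [Real.dist_eq] at hN
    exact hN.le
  have hev2 : ∀ᶠ N : ℕ in atTop, xN N M / (N : ℝ) ≤ 2 * δ := by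
    have := Metric.tendsto_nhds.1 (hconv M) δ hδ
    filter_upwards [this] with N hN
    rw [Real.dist_eq] at hN
    have := abs_lt.1 hN
    linarith [hxM, this.2]
  have hev3 : ∀ᶠ N : ℕ in atTop, ∀ i ∈ Finset.range M, |xN N i / (N : ℝ) - x i| ≤ c₂ := by
    rw [eventually_all_finset]
    intro i _
    have := Metric.tendsto_nhds.1 (hconv i) c₂ hc₂
    filter_upwards [this] with N hN
    rw [Real.dist_eq] at hN
    exact hN.le
  filter_upwards [hev0, hev1, hev2, hev3] with N h0 h1 h2 h3
  intro z hz
  rw [Metric.mem_closedBall, dist_zero_right] at hz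
  -- per-N setup
  set aN : ℕ → ℝ := fun i => xN N i / (N : ℝ) with haNdef
  have hNpos : 0 < N := by omega
  have hNR : (0:ℝ) < (N : ℝ) := by exact_mod_cast hNpos
  have haNnn : ∀ i, i < N → 0 ≤ aN i := fun i hi => div_nonneg (hNnn N i hi) hNR.le
  have haNdec : ∀ i j, i ≤ j → j < N → aN j ≤ aN i := by
    intro i j hij hj
    have h' := hNdec N i j hij hj
    simp only [haNdef]
    gcongr
  set sN : ℝ := ∑ i ∈ Finset.range N, aN i with hsNdef
  have hsγ : |sN - γ| ≤ εB := by
    have : sN = (∑ i ∈ Finset.range N, xN N i) / (N : ℝ) := by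
      rw [hsNdef, Finset.sum_div]
    rw [this]
    exact h1
  have hsnn : 0 ≤ sN := Finset.sum_nonneg (fun i hi => haNnn i (Finset.mem_range.1 hi))
  have hsΓ : sN ≤ Γ := by
    have ha := (abs_le.1 hsγ).2
    have hεB1 : εB ≤ 1 := min_le_left _ _
    rw [hΓdef]; linarith only [ha, hεB1]
  have hsεB : |γ - sN| ≤ εB := by rw [abs_sub_comm]; exact hsγ
  -- product identity
  have hFid : (∏ i ∈ Finset.range N, (1 - ((aN i : ℝ) : ℂ) * z))
      = Complex.exp (-(sN : ℂ) * z) * ∏ i ∈ Finset.range N, wf (aN i) z := by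
    have hprod : ∏ i ∈ Finset.range N, wf (aN i) z
        = Complex.exp ((sN : ℂ) * z) * ∏ i ∈ Finset.range N, (1 - ((aN i : ℝ) : ℂ) * z) := by
      unfold wf
      rw [Finset.prod_mul_distrib, ← Complex.exp_sum]
      congr 2
      rw [← Finset.sum_mul]
      congr 1
      rw [hsNdef]
      push_cast
      rfl
    rw [hprod, ← mul_assoc, ← Complex.exp_add]
    have hzero : -(sN : ℂ) * z + (sN : ℂ) * z = 0 := by ring
    rw [hzero, Complex.exp_zero, one_mul]
  -- norm bounds
  have hπn : ‖∏ i ∈ Finset.range N, wf (aN i) z‖ ≤ K₂ := by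
    refine (prod_wf_norm_le _ _ (fun i hi => haNnn i (Finset.mem_range.1 hi)) hz).trans
      (Real.exp_le_exp.2 ?_)
    have h' := mul_le_mul_of_nonneg_left hsΓ (by linarith only [hR0] : (0:ℝ) ≤ 2 * R)
    linarith only [h']
  have hsplit : ∏ i ∈ Finset.range N, wf (aN i) z
      = (∏ i ∈ Finset.range M, wf (aN i) z) * ∏ i ∈ Finset.Ico M N, wf (aN i) z :=
    (Finset.prod_range_mul_prod_Ico _ (by omega)).symm
  have haIco : ∀ i ∈ Finset.Ico M N, aN i ≤ 2 * δ := by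
    intro i hi
    obtain ⟨hi1, hi2⟩ := Finset.mem_Ico.1 hi
    exact (haNdec M i hi1 hi2).trans h2
  have hT1 : ‖(∏ i ∈ Finset.Ico M N, wf (aN i) z) - 1‖ ≤ ε₁ := by
    have hs1 := sum_wf_sub_one_le (Finset.Ico M N) aN hδR hR
      (fun i hi => haNnn i (Finset.mem_Ico.1 hi).2) haIco hz
    have hs2 : ∑ i ∈ Finset.Ico M N, ‖wf (aN i) z - 1‖ ≤ 6 * δ * R^2 * Γ := by
      refine hs1.trans ?_
      have hsub : ∑ i ∈ Finset.Ico M N, aN i ≤ sN := by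
        rw [hsNdef]
        refine Finset.sum_le_sum_of_subset_of_nonneg ?_ ?_
        · intro i hi
          rw [Finset.mem_range]
          exact (Finset.mem_Ico.1 hi).2
        · intro i hi _
          exact haNnn i (Finset.mem_range.1 hi)
      have h6 : (0:ℝ) ≤ 6 * δ * R^2 := by positivity
      exact mul_le_mul_of_nonneg_left (hsub.trans hsΓ) h6
    refine (prod_sub_one_norm_le _ _).trans ?_
    have h0' : 0 ≤ ∑ i ∈ Finset.Ico M N, ‖wf (aN i) z - 1‖ :=
      Finset.sum_nonneg fun i _ => norm_nonneg _
    have := exp_sub_one_le_three h0' (hs2.trans hδ1)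
    linarith only [this, hs2, hδ2]
  have hTn : ‖∏ i ∈ Finset.Ico M N, wf (aN i) z‖ ≤ 2 := by
    have h' := norm_sub_norm_le (∏ i ∈ Finset.Ico M N, wf (aN i) z) 1
    rw [norm_one] at h'
    linarith only [h', hT1, hε₁1]
  -- head comparison
  have haCnn : ∀ i ∈ Finset.range M, 0 ≤ aN i := fun i hi =>
    haNnn i (by have := Finset.mem_range.1 hi; omega)
  have hxC : ∀ i, x i ≤ C := by
    intro i
    have := hdec 0 i (Nat.zero_le i)
    rw [hCdef]; linarith only [this]
  have haC : ∀ i ∈ Finset.range M, aN i ≤ C := by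
    intro i hi
    have h' := (abs_le.1 (h3 i hi)).2
    have hxiC : x i ≤ x 0 := hdec 0 i (Nat.zero_le i)
    have hc21 : c₂ ≤ 1 := min_le_left _ _
    rw [hCdef]; linarith only [h', hxiC, hc21]
  have hH : ‖(∏ i ∈ Finset.range M, wf (x i) z) - ∏ i ∈ Finset.range M, wf (aN i) z‖
      ≤ ε₁ := by
    have hb := prod_sub_prod_norm_le (Finset.range M) (fun i => wf (x i) z)
      (fun i => wf (aN i) z) (fun _ => Real.exp (2 * C * R))
      (fun i _ => Real.one_le_exp (by positivity))
      (fun i hi => (wf_norm_le (hnn i) z).trans (Real.exp_le_exp.2 (by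
        have h' := mul_le_mul (hxC i) hz (norm_nonneg z) hC0.le
        linarith only [h'])))
      (fun i hi => (wf_norm_le (haCnn i hi) z).trans (Real.exp_le_exp.2 (by
        have h' := mul_le_mul (haC i hi) hz (norm_nonneg z) hC0.le
        linarith only [h'])))
    have hsum' : ∑ i ∈ Finset.range M, ‖wf (x i) z - wf (aN i) z‖ ≤ M * (c₂ * K₄) := by
      have hdiff : ∀ i ∈ Finset.range M, ‖wf (x i) z - wf (aN i) z‖ ≤ c₂ * K₄ := by
        intro i hi
        refine (wf_diff_le' (hnn i) (haCnn i hi) (hxC i) (haC i hi) hz hR0.le).trans ?_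
        have habs : |x i - aN i| ≤ c₂ := by rw [abs_sub_comm]; exact h3 i hi
        exact mul_le_mul_of_nonneg_right habs hK₄0.le
      calc ∑ i ∈ Finset.range M, ‖wf (x i) z - wf (aN i) z‖
          ≤ ∑ _i ∈ Finset.range M, c₂ * K₄ := Finset.sum_le_sum hdiff
        _ = M * (c₂ * K₄) := by rw [Finset.sum_const, Finset.card_range, nsmul_eq_mul]
    refine hb.trans ?_
    have hPpos : (0:ℝ) < (Real.exp (2 * C * R))^M := by positivity
    have hprodB : ∏ _i ∈ Finset.range M, Real.exp (2 * C * R)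
        = (Real.exp (2 * C * R))^M := by rw [Finset.prod_const, Finset.card_range]
    rw [hprodB]
    have hstep : (Real.exp (2 * C * R))^M * ((M : ℝ) * (c₂ * K₄)) = K₅ * M * c₂ := by
      rw [hK₅def]; ring
    have hc₂' : c₂ ≤ ε₁ / ((K₅ + 1) * ((M : ℝ) + 1)) := by
      refine (min_le_right _ _).trans (le_of_eq ?_)
      push_cast
      ring_nf
    have hfin : K₅ * (M : ℝ) * c₂ ≤ ε₁ := by
      have hD : (0:ℝ) < (K₅ + 1) * ((M : ℝ) + 1) := by positivity
      have hKM : K₅ * (M : ℝ) ≤ (K₅ + 1) * ((M : ℝ) + 1) := by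
        nlinarith only [hK₅0.le, Nat.cast_nonneg (α := ℝ) M]
      have h2' : K₅ * (M : ℝ) / ((K₅ + 1) * ((M : ℝ) + 1)) ≤ 1 := (div_le_one hD).2 hKM
      calc K₅ * (M : ℝ) * c₂ ≤ K₅ * (M : ℝ) * (ε₁ / ((K₅ + 1) * ((M : ℝ) + 1))) := by
            refine mul_le_mul_of_nonneg_left hc₂' ?_
            positivity
        _ = (K₅ * (M : ℝ) / ((K₅ + 1) * ((M : ℝ) + 1))) * ε₁ := by ring
        _ ≤ 1 * ε₁ := mul_le_mul_of_nonneg_right h2' hε₁.le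
        _ = ε₁ := one_mul _
    calc (Real.exp (2 * C * R))^M * ∑ i ∈ Finset.range M, ‖wf (x i) z - wf (aN i) z‖
        ≤ (Real.exp (2 * C * R))^M * ((M : ℝ) * (c₂ * K₄)) :=
          mul_le_mul_of_nonneg_left hsum' hPpos.le
      _ = K₅ * (M : ℝ) * c₂ := hstep
      _ ≤ ε₁ := hfin
  -- exponential bounds
  have hexpγ : ‖Complex.exp (-(γ:ℂ) * z)‖ ≤ K₁ := by
    refine (norm_cexp_le _).trans (Real.exp_le_exp.2 ?_)
    have hn : ‖-(γ:ℂ) * z‖ = |γ| * ‖z‖ := by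
      rw [neg_mul, norm_neg, norm_mul, Complex.norm_real, Real.norm_eq_abs]
    rw [hn, abs_of_nonneg hγ0]
    have h1' := mul_le_mul_of_nonneg_left hz hγ0
    have h2' : γ * R ≤ Γ * R :=
      mul_le_mul_of_nonneg_right (by rw [hΓdef]; linarith only []) hR0.le
    linarith only [h1', h2']
  have hexpdiff : ‖Complex.exp (-(γ:ℂ) * z) - Complex.exp (-(sN:ℂ) * z)‖
      ≤ ε₀ / (4 * K₂) := by
    set w : ℂ := ((γ - sN : ℝ) : ℂ) * z with hwdef
    have hwn : ‖w‖ ≤ εB * R := by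
      rw [hwdef, norm_mul, Complex.norm_real, Real.norm_eq_abs]
      exact mul_le_mul hsεB hz (norm_nonneg z) hεB.le
    have hw1 : ‖w‖ ≤ 1 := by
      refine hwn.trans ?_
      have h' : εB ≤ 1 / R := (min_le_right _ _).trans (min_le_left _ _)
      have := (le_div_iff₀ hR0).1 h'
      linarith only [this]
    have key : Complex.exp (-(γ:ℂ) * z) - Complex.exp (-(sN:ℂ) * z)
        = Complex.exp (-(γ:ℂ) * z) * (1 - Complex.exp w) := by
      rw [mul_sub, mul_one]
      congr 1
      rw [← Complex.exp_add]
      congr 1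
      rw [hwdef]
      push_cast
      ring
    rw [key, norm_mul]
    have h2w : ‖1 - Complex.exp w‖ ≤ 2 * ‖w‖ := by
      rw [norm_sub_rev]
      have := Complex.norm_exp_sub_one_le (x := w) hw1
      exact this
    have hεB' : εB ≤ ε₀ / (8 * K₁ * K₂ * R) := (min_le_right _ _).trans (min_le_right _ _)
    have hεB'' := (le_div_iff₀ (show (0:ℝ) < 8 * K₁ * K₂ * R by positivity)).1 hεB'
    calc ‖Complex.exp (-(γ:ℂ) * z)‖ * ‖1 - Complex.exp w‖
        ≤ K₁ * (2 * (εB * R)) := by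
          refine mul_le_mul hexpγ (h2w.trans ?_) (norm_nonneg _) hK₁0.le
          linarith only [hwn]
      _ ≤ ε₀ / (4 * K₂) := by
          rw [le_div_iff₀ (show (0:ℝ) < 4 * K₂ by positivity)]
          calc K₁ * (2 * (εB * R)) * (4 * K₂) = εB * (8 * K₁ * K₂ * R) := by ring
            _ ≤ ε₀ := hεB''
  -- assembly
  have hPM := hPMn z hz
  have hPt := hPtail z hz
  rw [dist_eq_norm, hFid]
  have hdecomp : Complex.exp (-(γ:ℂ) * z) * (∏' i : ℕ, wf (x i) z)
      - Complex.exp (-(sN:ℂ) * z) * ∏ i ∈ Finset.range N, wf (aN i) z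
      = Complex.exp (-(γ:ℂ) * z) * ((∏' i : ℕ, wf (x i) z)
          - ∏ i ∈ Finset.range N, wf (aN i) z)
        + (Complex.exp (-(γ:ℂ) * z) - Complex.exp (-(sN:ℂ) * z))
          * ∏ i ∈ Finset.range N, wf (aN i) z := by ring
  have hPπ : ‖(∏' i : ℕ, wf (x i) z) - ∏ i ∈ Finset.range N, wf (aN i) z‖
      ≤ 4 * K₂ * ε₁ := by
    have hd2 : (∏' i : ℕ, wf (x i) z) - ∏ i ∈ Finset.range N, wf (aN i) z
        = ((∏' i : ℕ, wf (x i) z) - ∏ i ∈ Finset.range M, wf (x i) z)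
          + ((∏ i ∈ Finset.range M, wf (x i) z)
              * (1 - ∏ i ∈ Finset.Ico M N, wf (aN i) z)
            + ((∏ i ∈ Finset.range M, wf (x i) z) - ∏ i ∈ Finset.range M, wf (aN i) z)
              * ∏ i ∈ Finset.Ico M N, wf (aN i) z) := by
      rw [hsplit]; ring
    rw [hd2]
    have hstep1 : ‖(∏ i ∈ Finset.range M, wf (x i) z)
          * (1 - ∏ i ∈ Finset.Ico M N, wf (aN i) z)
        + ((∏ i ∈ Finset.range M, wf (x i) z) - ∏ i ∈ Finset.range M, wf (aN i) z)
          * ∏ i ∈ Finset.Ico M N, wf (aN i) z‖ ≤ K₂ * ε₁ + ε₁ * 2 := by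
      refine (norm_add_le _ _).trans ?_
      rw [norm_mul, norm_mul]
      refine add_le_add ?_ ?_
      · refine mul_le_mul hPM ?_ (norm_nonneg _) hK₂0.le
        rw [norm_sub_rev]
        exact hT1
      · exact mul_le_mul hH hTn (norm_nonneg _) hε₁.le
    refine (norm_add_le _ _).trans ?_
    have := add_le_add hPt hstep1
    refine this.trans ?_
    have h' := mul_le_mul_of_nonneg_right hK₂ hε₁.le
    linarith only [h']
  calc ‖Complex.exp (-(γ:ℂ) * z) * (∏' i : ℕ, wf (x i) z)
      - Complex.exp (-(sN:ℂ) * z) * ∏ i ∈ Finset.range N, wf (aN i) z‖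
      ≤ ‖Complex.exp (-(γ:ℂ) * z)‖
          * ‖(∏' i : ℕ, wf (x i) z) - ∏ i ∈ Finset.range N, wf (aN i) z‖
        + ‖Complex.exp (-(γ:ℂ) * z) - Complex.exp (-(sN:ℂ) * z)‖
          * ‖∏ i ∈ Finset.range N, wf (aN i) z‖ := by
        rw [hdecomp]
        refine (norm_add_le _ _).trans ?_
        rw [norm_mul, norm_mul]
    _ ≤ K₁ * (4 * K₂ * ε₁) + (ε₀ / (4 * K₂)) * K₂ := by
        refine add_le_add ?_ ?_
        · exact mul_le_mul hexpγ hPπ (norm_nonneg _) hK₁0.le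
        · exact mul_le_mul hexpdiff hπn (norm_nonneg _) (by positivity)
    _ < ε := by
        have he1 : K₁ * (4 * K₂ * ε₁) = ε₀ * (4 / 100) := by
          rw [hε₁def]
          field_simp
        have he2 : (ε₀ / (4 * K₂)) * K₂ = ε₀ / 4 := by
          field_simp
        rw [he1, he2]
        linarith only [hε₀, hε₀ε]

/-- Convergence of rescaled reverse characteristic polynomials to the entire function
`E_+(z;(x,γ)) = e^{-γz} ∏_j e^{x_j z}(1 - x_j z)`, uniformly on compact subsets of `ℂ`,
given convergence of the embedded tuples in the boundary space `Ω_+`. -/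
theorem charPoly_tendstoLocallyUniformly
    (xN : ℕ → ℕ → ℝ) (x : ℕ → ℝ) (γ : ℝ)
    (hNdec : ∀ N, ∀ i j, i ≤ j → j < N → xN N j ≤ xN N i)
    (hNnn : ∀ N i, i < N → 0 ≤ xN N i)
    (hdec : ∀ i j, i ≤ j → x j ≤ x i) (hnn : ∀ i, 0 ≤ x i)
    (hconv : ∀ i, Tendsto (fun N : ℕ => xN N i / (N : ℝ)) atTop (nhds (x i)))
    (hsum : Summable x) (hγ : (∑' i, x i) ≤ γ)
    (hsumconv : Tendsto (fun N : ℕ => (∑ i ∈ Finset.range N, xN N i) / (N : ℝ))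
      atTop (nhds γ)) :
    TendstoLocallyUniformly
      (fun (N : ℕ) (z : ℂ) => ∏ i ∈ Finset.range N, (1 - ((xN N i / (N : ℝ) : ℝ) : ℂ) * z))
      (fun z : ℂ => Complex.exp (-(γ : ℂ) * z) *
        ∏' i : ℕ, Complex.exp ((x i : ℂ) * z) * (1 - (x i : ℂ) * z))
      atTop := by
  rw [tendstoLocallyUniformly_iff_forall_isCompact]
  intro K hK
  obtain ⟨r, hr⟩ := hK.isBounded.subset_closedBall 0
  have hmain := main_unif xN x γ hNdec hNnn hdec hnn hconv hsum hγ hsumconv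
    (max r 1) (le_max_right _ _)
  exact hmain.mono (hr.trans (Metric.closedBall_subset_closedBall (le_max_left _ _)))
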